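/- Every finite presemifield is isotopic to a finite semifield: if D is a finite nonassociative ring (not necessarily with identity) with more than one element in which the product of any two nonzero elements is nonzero, then there exists a multiplication ∘ on the additive group of D making it a finite semifield (with a two-sided identity), together with bijective additive maps F, G, H of D satisfying H(a·b) = F(a) ∘ G(b) for all a, b ∈ D. -/
import Mathlib


/-- A finite presemifield: a finite nonassociative ring (no identity assumed) with
more than one element in which the product of two nonzero elements is nonzero. -/
structure FinitePresemifield where
  D : Type
  [addGroup : AddCommGroup D]
  mul : D → D → D
  finite : Finite D
  nontrivial : Nontrivial D
  mul_add : ∀ a b c : D, mul a (b + c) = mul a b + mul a c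
  add_mul : ∀ a b c : D, mul (a + b) c = mul a c + mul b c
  noZeroDiv : ∀ a b : D, mul a b = 0 → a = 0 ∨ b = 0

attribute [instance] FinitePresemifield.addGroup

/-- Every finite presemifield is isotopic to a finite semifield: there is a new
multiplication `mul'` on the same additive group with a two-sided identity
(making it a finite semifield) and additive bijections `F, G, H` with
`H (a · b) = F a ∘ G b`. -/
theorem presemifield_isotopic_to_semifield (P : FinitePresemifield) :
    ∃ (mul' : P.D → P.D → P.D) (e : P.D),
      (∀ a b c : P.D, mul' a (b + c) = mul' a b + mul' a c) ∧
      (∀ a b c : P.D, mul' (a + b) c = mul' a c + mul' b c) ∧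
      e ≠ 0 ∧
      (∀ a : P.D, mul' e a = a) ∧
      (∀ a : P.D, mul' a e = a) ∧
      (∀ a b : P.D, mul' a b = 0 → a = 0 ∨ b = 0) ∧
      ∃ F G H : P.D ≃+ P.D, ∀ a b : P.D, H (P.mul a b) = mul' (F a) (G b) := by
  have := P.finite
  have := P.nontrivial
  obtain ⟨u, hu⟩ := exists_ne (0 : P.D)
  -- basic facts
  have mul_zero' : ∀ a : P.D, P.mul a 0 = 0 := by
    intro a
    have h := P.mul_add a 0 0
    rw [add_zero] at h
    exact (left_eq_add.mp h)
  have zero_mul' : ∀ a : P.D, P.mul 0 a = 0 := by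
    intro a
    have h := P.add_mul 0 0 a
    rw [add_zero] at h
    exact (left_eq_add.mp h)
  have sub_mul' : ∀ a b c : P.D, P.mul (a - b) c = P.mul a c - P.mul b c := by
    intro a b c
    have h := P.add_mul (a - b) b c
    rw [sub_add_cancel] at h
    rw [h]; abel
  have mul_sub' : ∀ a b c : P.D, P.mul a (b - c) = P.mul a b - P.mul a c := by
    intro a b c
    have h := P.mul_add a (b - c) c
    rw [sub_add_cancel] at h
    rw [h]; abel
  -- F a = a * u, G b = u * b as additive homs
  let Fhom : P.D →+ P.D :=
    { toFun := fun a => P.mul a u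
      map_zero' := zero_mul' u
      map_add' := fun a b => P.add_mul a b u }
  let Ghom : P.D →+ P.D :=
    { toFun := fun b => P.mul u b
      map_zero' := mul_zero' u
      map_add' := fun a b => P.mul_add u a b }
  have Finj : Function.Injective Fhom := by
    intro a b hab
    have : P.mul (a - b) u = 0 := by
      rw [sub_mul']
      simpa [Fhom, sub_eq_zero] using hab
    rcases P.noZeroDiv _ _ this with h | h
    · exact sub_eq_zero.mp h
    · exact absurd h hu
  have Ginj : Function.Injective Ghom := by
    intro a b hab
    have : P.mul u (a - b) = 0 := by
      rw [mul_sub']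
      simpa [Ghom, sub_eq_zero] using hab
    rcases P.noZeroDiv _ _ this with h | h
    · exact absurd h hu
    · exact sub_eq_zero.mp h
  let F : P.D ≃+ P.D := AddEquiv.ofBijective Fhom (Finite.injective_iff_bijective.mp Finj)
  let G : P.D ≃+ P.D := AddEquiv.ofBijective Ghom (Finite.injective_iff_bijective.mp Ginj)
  have hF : ∀ a, F a = P.mul a u := fun a => rfl
  have hG : ∀ b, G b = P.mul u b := fun b => rfl
  refine ⟨fun x y => P.mul (F.symm x) (G.symm y), P.mul u u, ?_, ?_, ?_, ?_, ?_, ?_, F, G,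
    AddEquiv.refl _, ?_⟩
  · intro a b c; dsimp only; rw [map_add]; exact P.mul_add _ _ _
  · intro a b c; dsimp only; rw [map_add]; exact P.add_mul _ _ _
  · intro h
    rcases P.noZeroDiv _ _ h with h' | h' <;> exact hu h'
  · intro a
    dsimp only
    have h1 : F.symm (P.mul u u) = u := by
      apply F.injective; rw [F.apply_symm_apply, hF]
    rw [h1]
    have := G.apply_symm_apply a
    rwa [hG] at this
  · intro a
    dsimp only
    have h1 : G.symm (P.mul u u) = u := by
      apply G.injective; rw [G.apply_symm_apply, hG]
    rw [h1]
    have := F.apply_symm_apply a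
    rwa [hF] at this
  · intro a b h
    rcases P.noZeroDiv _ _ h with h' | h'
    · left; simpa using congrArg F h'
    · right; simpa using congrArg G h'
  · intro a b
    simp only [AddEquiv.refl_apply, AddEquiv.symm_apply_apply]
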